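/- For every ε > 0 and every integer r large enough, the integral ∫₀^{r(1−ε_r)} e^{-x} x^r / r! dx is at most r^{-0.3 log r}, where ε_r = r^{-1/2} log r. -/
import Mathlib

open MeasureTheory Filter Real

lemma gamma_aux_mono {x b : ℝ} {r : ℕ} (hx : 0 < x) (hxb : x ≤ b) (hbr : b ≤ r) :
    Real.exp (-x) * x ^ r ≤ Real.exp (-b) * b ^ r := by
  have hb : 0 < b := hx.trans_le hxb
  have hlog : (b - x) / b ≤ Real.log b - Real.log x := by
    have h := Real.log_le_sub_one_of_pos (show 0 < x / b by positivity)
    rw [Real.log_div hx.ne' hb.ne'] at h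
    have : Real.log x - Real.log b ≤ x / b - 1 := h
    have hb' : (b - x) / b = 1 - x / b := by field_simp
    linarith
  have key : b - x ≤ (r : ℝ) * (Real.log b - Real.log x) := by
    have h1 : b * ((b - x) / b) ≤ (r : ℝ) * (Real.log b - Real.log x) := by
      apply mul_le_mul hbr hlog (div_nonneg (by linarith) hb.le) (Nat.cast_nonneg r)
    rwa [mul_div_cancel₀ _ hb.ne'] at h1
  have ex : Real.exp (-x) * x ^ r = Real.exp (-x + r * Real.log x) := by
    rw [Real.exp_add, ← Real.exp_log hx, ← Real.exp_nat_mul, Real.exp_log hx]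
  have eb : Real.exp (-b) * b ^ r = Real.exp (-b + r * Real.log b) := by
    rw [Real.exp_add, ← Real.exp_log hb, ← Real.exp_nat_mul, Real.exp_log hb]
  rw [ex, eb, Real.exp_le_exp]
  linarith

lemma gamma_aux_pow_div_fact (r : ℕ) : ((r : ℝ)) ^ r ≤ (Nat.factorial r : ℝ) * Real.exp r := by
  have h : (r : ℝ) ^ r / (Nat.factorial r : ℝ) ≤ Real.exp r := by
    have hsum := Real.sum_le_exp_of_nonneg (x := (r : ℝ)) (Nat.cast_nonneg r) (r + 1)
    refine le_trans ?_ hsum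
    have := Finset.single_le_sum (f := fun i => (r : ℝ) ^ i / (Nat.factorial i : ℝ))
      (fun i _ => by positivity) (Finset.self_mem_range_succ r)
    simpa using this
  have hfact : (0 : ℝ) < (Nat.factorial r : ℝ) := by positivity
  calc (r : ℝ) ^ r = ((r : ℝ) ^ r / (Nat.factorial r : ℝ)) * (Nat.factorial r : ℝ) := by
        field_simp
    _ ≤ Real.exp r * (Nat.factorial r : ℝ) := by gcongr
    _ = (Nat.factorial r : ℝ) * Real.exp r := by ring

lemma gamma_aux_one_sub_le {ε : ℝ} (h0 : 0 ≤ ε) (h1 : ε ≤ 1/10) :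
    1 - ε ≤ Real.exp (-(ε + 0.4 * ε ^ 2)) := by
  set s : ℝ := ε + 0.4 * ε ^ 2 with hs
  have hs0 : 0 ≤ s := by rw [hs]; nlinarith [sq_nonneg ε]
  have hs1 : s ≤ 1 := by rw [hs]; nlinarith [sq_nonneg ε]
  have hb := Real.exp_bound' hs0 hs1 (n := 3) (by norm_num)
  have hb' : Real.exp s ≤ 1 + s + s ^ 2 / 2 + (2/9) * s ^ 3 := by
    refine hb.trans_eq ?_
    rw [Finset.sum_range_succ, Finset.sum_range_succ, Finset.sum_range_one]
    norm_num [Nat.factorial]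
    ring
  have hkey : (1 - ε) * (1 + s + s ^ 2 / 2 + (2/9) * s ^ 3) ≤ 1 := by
    rw [hs]; nlinarith [sq_nonneg ε, pow_le_pow_left₀ h0 h1 2, pow_le_pow_left₀ h0 h1 3,
      pow_le_pow_left₀ h0 h1 4]
  have h2 : (1 - ε) * Real.exp s ≤ 1 := by
    calc (1 - ε) * Real.exp s ≤ (1 - ε) * (1 + s + s ^ 2 / 2 + (2/9) * s ^ 3) := by
          apply mul_le_mul_of_nonneg_left hb' (by linarith)
      _ ≤ 1 := hkey
  have hexp : (0 : ℝ) < Real.exp s := Real.exp_pos s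
  rw [Real.exp_neg, inv_eq_one_div, le_div_iff₀ hexp]
  linarith

/-- Lower-tail estimate for the incomplete Gamma integral:
`∫₀^{r(1-ε_r)} e^{-x} x^r / r! dx ≤ r^{-0.3 log r}` for all large `r`,
where `ε_r = r^{-1/2} log r`. -/
theorem gamma_lower_tail :
    ∀ᶠ r : ℕ in atTop,
      (∫ x in (0 : ℝ)..((r : ℝ) * (1 - (r : ℝ) ^ (-(1 : ℝ) / 2) * Real.log r)),
          Real.exp (-x) * x ^ r / (Nat.factorial r))
        ≤ (r : ℝ) ^ (-(0.3) * Real.log r) := by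
  -- eventual smallness of ε_r
  have htend : Tendsto (fun r : ℕ => (r : ℝ) ^ (-(1 : ℝ) / 2) * Real.log r) atTop (nhds 0) := by
    have h0 : Tendsto (fun x : ℝ => Real.log x / x ^ ((1:ℝ)/2)) atTop (nhds 0) :=
      (isLittleO_log_rpow_atTop (by norm_num : (0:ℝ) < 1/2)).tendsto_div_nhds_zero
    have h1 : Tendsto (fun r : ℕ => Real.log r / (r : ℝ) ^ ((1:ℝ)/2)) atTop (nhds 0) :=
      h0.comp tendsto_natCast_atTop_atTop
    refine h1.congr' ?_
    filter_upwards [eventually_ge_atTop 1] with r hr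
    have hr0 : (0:ℝ) ≤ (r : ℝ) := Nat.cast_nonneg r
    rw [div_eq_mul_inv, ← Real.rpow_neg hr0, mul_comm]
    norm_num
  have hεsmall : ∀ᶠ r : ℕ in atTop, (r : ℝ) ^ (-(1 : ℝ) / 2) * Real.log r < 1/10 :=
    htend.eventually_lt_const (by norm_num)
  have hlog : ∀ᶠ r : ℕ in atTop, (100:ℝ) ≤ Real.log r :=
    (Real.tendsto_log_atTop.comp tendsto_natCast_atTop_atTop).eventually_ge_atTop 100
  filter_upwards [hεsmall, hlog, eventually_ge_atTop 1] with r hε10 hL100 hr1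
  set L : ℝ := Real.log r with hLdef
  set ε : ℝ := (r : ℝ) ^ (-(1 : ℝ) / 2) * L with hεdef
  have hr0 : (0:ℝ) < (r:ℝ) := by exact_mod_cast hr1
  have hε0 : 0 ≤ ε := by
    rw [hεdef]
    exact mul_nonneg (Real.rpow_nonneg hr0.le _) (by linarith)
  set b : ℝ := (r : ℝ) * (1 - ε) with hbdef
  have hb0 : 0 ≤ b := by
    rw [hbdef]; exact mul_nonneg hr0.le (by linarith)
  have hbr : b ≤ (r : ℝ) := by
    rw [hbdef]; nlinarith
  set C : ℝ := Real.exp (-b) * b ^ r / (Nat.factorial r : ℝ) with hCdef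
  have hC0 : 0 ≤ C := by rw [hCdef]; positivity
  -- Step A: bound the integral by C * b
  have stepA : (∫ x in (0 : ℝ)..b, Real.exp (-x) * x ^ r / (Nat.factorial r)) ≤ C * b := by
    have hnorm : ∀ x ∈ Set.uIoc (0:ℝ) b, ‖Real.exp (-x) * x ^ r / (Nat.factorial r : ℝ)‖ ≤ C := by
      intro x hx
      rw [Set.uIoc_of_le hb0] at hx
      have hx0 : 0 < x := hx.1
      rw [Real.norm_eq_abs, abs_of_nonneg (by positivity)]
      rw [hCdef]
      have hmono := gamma_aux_mono hx.1 hx.2 hbr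
      have hfp : (0:ℝ) < (Nat.factorial r : ℝ) := by positivity
      exact (div_le_div_iff_of_pos_right hfp).mpr hmono
    have := intervalIntegral.norm_integral_le_of_norm_le_const hnorm
    rw [sub_zero] at this
    calc (∫ x in (0 : ℝ)..b, Real.exp (-x) * x ^ r / (Nat.factorial r))
        ≤ ‖∫ x in (0 : ℝ)..b, Real.exp (-x) * x ^ r / (Nat.factorial r : ℝ)‖ :=
          le_abs_self _
      _ ≤ C * |b| := this
      _ = C * b := by rw [abs_of_nonneg hb0]
  -- Step B/C: C * b ≤ r * exp(r ε) * (1-ε)^r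
  have hfact : ((r:ℝ)) ^ r ≤ (Nat.factorial r : ℝ) * Real.exp r := gamma_aux_pow_div_fact r
  have hfactpos : (0:ℝ) < (Nat.factorial r : ℝ) := by positivity
  have stepB : C * b ≤ (r : ℝ) * Real.exp ((r:ℝ) * ε) * (1 - ε) ^ r := by
    have e1 : C * b = (Real.exp (-(r:ℝ)) * (r:ℝ) ^ r / (Nat.factorial r : ℝ)) *
        (Real.exp ((r:ℝ) * ε) * (1 - ε) ^ r * b) := by
      rw [hCdef, hbdef, mul_pow, show -((r:ℝ) * (1 - ε)) = -(r:ℝ) + (r:ℝ) * ε by ring,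
        Real.exp_add]
      ring
    have h1 : Real.exp (-(r:ℝ)) * (r:ℝ) ^ r / (Nat.factorial r : ℝ) ≤ 1 := by
      rw [div_le_one hfactpos, Real.exp_neg]
      rw [inv_mul_le_iff₀ (Real.exp_pos _), mul_comm]
      exact hfact
    have h2 : (0:ℝ) ≤ Real.exp ((r:ℝ) * ε) * (1 - ε) ^ r * b := by
      have : (0:ℝ) ≤ (1 - ε) ^ r := pow_nonneg (by linarith) r
      positivity
    calc C * b = (Real.exp (-(r:ℝ)) * (r:ℝ) ^ r / (Nat.factorial r : ℝ)) *
          (Real.exp ((r:ℝ) * ε) * (1 - ε) ^ r * b) := e1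
      _ ≤ 1 * (Real.exp ((r:ℝ) * ε) * (1 - ε) ^ r * b) := by
          exact mul_le_mul_of_nonneg_right h1 h2
      _ = Real.exp ((r:ℝ) * ε) * (1 - ε) ^ r * b := by ring
      _ ≤ Real.exp ((r:ℝ) * ε) * (1 - ε) ^ r * (r:ℝ) := by
          have : (0:ℝ) ≤ Real.exp ((r:ℝ) * ε) * (1 - ε) ^ r :=
            mul_nonneg (Real.exp_pos _).le (pow_nonneg (by linarith) r)
          exact mul_le_mul_of_nonneg_left hbr this
      _ = (r : ℝ) * Real.exp ((r:ℝ) * ε) * (1 - ε) ^ r := by ring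
  -- Step D: (1-ε)^r ≤ exp(-(r ε + 0.4 r ε^2))
  have stepD : (1 - ε) ^ r ≤ Real.exp (-((r:ℝ) * ε + 0.4 * ((r:ℝ) * ε ^ 2))) := by
    have h1 : (1 - ε) ^ r ≤ (Real.exp (-(ε + 0.4 * ε ^ 2))) ^ r :=
      pow_le_pow_left₀ (by linarith) (gamma_aux_one_sub_le hε0 hε10.le) r
    calc (1 - ε) ^ r ≤ (Real.exp (-(ε + 0.4 * ε ^ 2))) ^ r := h1
      _ = Real.exp ((r:ℝ) * (-(ε + 0.4 * ε ^ 2))) := (Real.exp_nat_mul _ r).symm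
      _ = Real.exp (-((r:ℝ) * ε + 0.4 * ((r:ℝ) * ε ^ 2))) := by ring_nf
  -- r ε² = L²
  have hre : (r:ℝ) * ε ^ 2 = L ^ 2 := by
    rw [hεdef, mul_pow, ← Real.rpow_natCast ((r:ℝ) ^ (-(1:ℝ)/2)) 2,
      ← Real.rpow_mul hr0.le]
    norm_num
    rw [Real.rpow_neg_one, ← mul_assoc, mul_inv_cancel₀ hr0.ne', one_mul]
  -- Final combination
  have hrexp : (r : ℝ) = Real.exp L := by rw [hLdef, Real.exp_log hr0]
  have final : (r : ℝ) * Real.exp ((r:ℝ) * ε) *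
      Real.exp (-((r:ℝ) * ε + 0.4 * ((r:ℝ) * ε ^ 2))) ≤ (r : ℝ) ^ (-(0.3) * Real.log r) := by
    rw [hre, Real.rpow_def_of_pos hr0, ← hLdef]
    rw [hrexp, ← Real.exp_add, ← Real.exp_add, Real.exp_le_exp]
    nlinarith [hL100]
  have hchain : (r : ℝ) * Real.exp ((r:ℝ) * ε) * (1 - ε) ^ r ≤
      (r : ℝ) * Real.exp ((r:ℝ) * ε) * Real.exp (-((r:ℝ) * ε + 0.4 * ((r:ℝ) * ε ^ 2))) := by
    exact mul_le_mul_of_nonneg_left stepD (by positivity)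
  exact stepA.trans (stepB.trans (hchain.trans final))
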